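/- For every Q ∈ (1/2, 1), the number h(Q) = 1/(1 + √((1−Q)(1+Q)/(Q(2−Q)))) satisfies 1/2 < h(Q) < 1 and (h(Q)/(1−h(Q)))·((Q+h(Q))/(2−Q−h(Q))) = Q/(1−Q). -/

import Mathlib

/-- For every `Q ∈ (1/2, 1)`, the number
`h(Q) = 1/(1 + √((1−Q)(1+Q)/(Q(2−Q))))` lies in `(1/2, 1)` and satisfies
`(h(Q)/(1−h(Q)))·((Q+h(Q))/(2−Q−h(Q))) = Q/(1−Q)`. -/
theorem h_Q_properties (Q : ℝ) (hQhalf : 1/2 < Q) (hQ1 : Q < 1) :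
    1/2 < 1 / (1 + Real.sqrt ((1 - Q) * (1 + Q) / (Q * (2 - Q)))) ∧
      1 / (1 + Real.sqrt ((1 - Q) * (1 + Q) / (Q * (2 - Q)))) < 1 ∧
      (1 / (1 + Real.sqrt ((1 - Q) * (1 + Q) / (Q * (2 - Q)))) /
          (1 - 1 / (1 + Real.sqrt ((1 - Q) * (1 + Q) / (Q * (2 - Q)))))) *
        ((Q + 1 / (1 + Real.sqrt ((1 - Q) * (1 + Q) / (Q * (2 - Q))))) /
          (2 - Q - 1 / (1 + Real.sqrt ((1 - Q) * (1 + Q) / (Q * (2 - Q)))))) =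
      Q / (1 - Q) := by
  have hQ0 : 0 < Q := by linarith
  have h2Q : 0 < 2 - Q := by linarith
  have h1Q : 0 < 1 - Q := by linarith
  have hden : 0 < Q * (2 - Q) := by positivity
  have hnum : 0 < (1 - Q) * (1 + Q) := by nlinarith
  set s := Real.sqrt ((1 - Q) * (1 + Q) / (Q * (2 - Q))) with hs
  have hsnn : 0 ≤ (1 - Q) * (1 + Q) / (Q * (2 - Q)) := by positivity
  have hs2 : s ^ 2 = (1 - Q) * (1 + Q) / (Q * (2 - Q)) := Real.sq_sqrt hsnn
  have hkey : Q * (2 - Q) * s ^ 2 = (1 - Q) * (1 + Q) := by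
    rw [hs2]; field_simp
  have hspos : 0 < s := Real.sqrt_pos.mpr (by positivity)
  have hslt1 : s < 1 := by
    have : (1 - Q) * (1 + Q) / (Q * (2 - Q)) < 1 := by
      rw [div_lt_one hden]; nlinarith
    calc s < Real.sqrt 1 := Real.sqrt_lt_sqrt hsnn this
      _ = 1 := Real.sqrt_one
  have h1s : 0 < 1 + s := by linarith
  constructor
  · rw [div_lt_div_iff₀ (by norm_num) h1s]; linarith
  constructor
  · rw [div_lt_one h1s]; linarith
  · have hd1 : 1 - 1 / (1 + s) = s / (1 + s) := by field_simp; ring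
    have hd2 : (2 - Q - 1 / (1 + s)) = ((1 - Q) + (2 - Q) * s) / (1 + s) := by
      field_simp; ring
    have hd2pos : 0 < (1 - Q) + (2 - Q) * s := by positivity
    rw [hd1, hd2]
    field_simp
    nlinarith [hkey, hspos, h1s]
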